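/- Let m₁, m₂ ≥ 2 be integers with 1/m₁ + 1/m₂ < 1, let a = (m₁m₂ − m₁ + m₂)/(2m₁m₂) and b = (m₁m₂ − m₁ − m₂)/(2m₁m₂), and let p be a prime number coprime to 2m₁m₂. Then {δ_p(a), δ_p(b)} = {a, b} or {δ_p(a), δ_p(b)} = {1−a, 1−b} (as unordered pairs) if and only if there exist ε ∈ {1,−1} and ε′ ∈ {1,−1} such that either (p ≡ ε (mod 2m₁) and p ≡ ε′ε (mod 2m₂)) or (p ≡ m₁ + ε (mod 2m₁) and p ≡ m₂ + ε′ε (mod 2m₂)). -/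

import Mathlib

open PowerSeries

noncomputable section

/-- Formal exponential `exp(u) = ∑ uᵏ/k!` of a power series `u`
(intended for `u` with zero constant term, where the coefficientwise sum is finite). -/
def psExp {K : Type*} [Field K] (u : PowerSeries K) : PowerSeries K :=
  PowerSeries.mk fun n =>
    ∑ k ∈ Finset.range (n + 1), (PowerSeries.coeff (R := K) n (u ^ k)) / (Nat.factorial k : K)

/-- Formal logarithm `log(1 + v) = ∑_{k≥1} (-1)^{k+1} vᵏ/k` of a power series `v`
with zero constant term. -/
def psLog {K : Type*} [Field K] (v : PowerSeries K) : PowerSeries K :=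
  PowerSeries.mk fun n =>
    ∑ k ∈ Finset.Icc 1 n, ((-1 : K) ^ (k + 1)) * (PowerSeries.coeff (R := K) n (v ^ k)) / (k : K)

/-- Substitution `z ↦ z^p` in a formal power series: `(psSubstPow p f)(z) = f(z^p)`. -/
def psSubstPow {K : Type*} [Field K] (p : ℕ) (f : PowerSeries K) : PowerSeries K :=
  PowerSeries.mk fun n => if p ∣ n then PowerSeries.coeff (R := K) (n / p) f else 0

/-- Gauss hypergeometric series `F(a,b|z) = ∑_n (a)_n (b)_n / (n!)² · zⁿ`. -/
def hgF (a b : ℚ) : PowerSeries ℚ :=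
  PowerSeries.mk fun n =>
    (ascPochhammer ℚ n).eval a * (ascPochhammer ℚ n).eval b / (Nat.factorial n : ℚ) ^ 2

/-- `G(a,b|z) = ∑_n (a)_n (b)_n / (n!)² · (∑_{i<n} (1/(a+i) + 1/(b+i) - 2/(1+i))) · zⁿ`. -/
def hgG (a b : ℚ) : PowerSeries ℚ :=
  PowerSeries.mk fun n =>
    (ascPochhammer ℚ n).eval a * (ascPochhammer ℚ n).eval b / (Nat.factorial n : ℚ) ^ 2 *
      ∑ i ∈ Finset.range n, (1 / (a + (i : ℚ)) + 1 / (b + (i : ℚ)) - 2 / (1 + (i : ℚ)))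

/-- The Schwarz map `D(a,b|z) = G(a,b|z)/F(a,b|z)`. -/
def hgD (a b : ℚ) : PowerSeries ℚ := hgG a b * (hgF a b)⁻¹

/-- `q(a,b|z) = z · exp(D(a,b|z))`. -/
def hgq (a b : ℚ) : PowerSeries ℚ := PowerSeries.X * psExp (hgD a b)

/-- The Dwork map `δ_p(x)`: the unique rational `y` with denominator coprime to `p`
such that `p·y - x` is an integer in `{0, …, p-1}`; explicitly `y = (x + k)/p` where
`k ∈ {0, …, p-1}` satisfies `k ≡ -x (mod p)`. -/
def dwork (p : ℕ) (x : ℚ) : ℚ :=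
  (x + (((-(x.num : ZMod p)) * ((x.den : ZMod p))⁻¹).val : ℚ)) / p

/-- `f` is `p`-integral: every coefficient is a rational number with denominator
coprime to `p`, i.e. lies in `ℤ_(p)`. -/
def pIntegral (p : ℕ) (f : PowerSeries ℚ) : Prop :=
  ∀ n, ¬ (p ∣ (PowerSeries.coeff (R := ℚ) n f).den)

section DworkAux


lemma rat_num_eq' (x : ℚ) : (x.num : ℚ) = x * x.den := by
  have hd : (x.den : ℚ) ≠ 0 := by exact_mod_cast x.den_nz
  rw [← div_eq_iff hd]; exact Rat.num_div_den x

lemma dwork_eq_iff' {p : ℕ} (hp : p.Prime) {x y : ℚ}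
    (hx : ¬ p ∣ x.den) (hy : ¬ p ∣ y.den) :
    dwork p x = y ↔ ∃ k : ℤ, 0 ≤ k ∧ k < p ∧ (p : ℚ) * y - x = k := by
  haveI : NeZero p := ⟨hp.ne_zero⟩
  have hp0 : (p : ℚ) ≠ 0 := by exact_mod_cast hp.ne_zero
  set w : ZMod p := (-(x.num : ZMod p)) * ((x.den : ZMod p))⁻¹ with hw
  set v : ℕ := w.val with hv
  have hdw : dwork p x = (x + (v : ℚ)) / p := rfl
  constructor
  · intro h
    refine ⟨(v : ℤ), Int.ofNat_nonneg v, by exact_mod_cast ZMod.val_lt w, ?_⟩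
    rw [← h, hdw, mul_comm, div_mul_cancel₀ _ hp0]
    push_cast; ring
  · rintro ⟨k, hk0, hkp, hk⟩
    have hden : (x.den : ℚ) ≠ 0 := by exact_mod_cast x.den_nz
    have hz : (p : ℤ) * y.num * x.den = (x.num + k * x.den) * y.den := by
      have h3 : (p : ℚ) * y.num * x.den = (x.num + k * x.den) * y.den := by
        linear_combination ((x.den : ℚ) * y.den) * hk + ((p : ℚ) * x.den) * rat_num_eq' y
          - (y.den : ℚ) * rat_num_eq' x
      exact_mod_cast h3
    have hdvd : (p : ℤ) ∣ (x.num + k * x.den) * y.den := ⟨y.num * x.den, by linarith [hz]⟩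
    have hpZ : Prime (p : ℤ) := Nat.prime_iff_prime_int.mp hp
    have hy' : ¬ (p : ℤ) ∣ (y.den : ℤ) := by exact_mod_cast hy
    have hdvd2 : (p : ℤ) ∣ (x.num + k * x.den) := (hpZ.dvd_mul.mp hdvd).resolve_right hy'
    have hzm : ((x.num + k * x.den : ℤ) : ZMod p) = 0 :=
      (ZMod.intCast_zmod_eq_zero_iff_dvd _ p).mpr hdvd2
    push_cast at hzm
    have hdz : ((x.den : ZMod p)) ≠ 0 := by
      simpa [ZMod.natCast_eq_zero_iff] using hx
    haveI : Fact p.Prime := ⟨hp⟩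
    have hkz : ((k : ZMod p)) = w := by
      rw [hw, eq_comm]
      field_simp
      linear_combination -hzm
    have hvk : v = k.toNat := by
      have h1 : ((k.toNat : ℕ) : ZMod p) = w := by
        rw [← hkz]; exact_mod_cast congrArg (Int.cast : ℤ → ZMod p) (Int.toNat_of_nonneg hk0)
      have h2 : ((k.toNat : ℕ) : ZMod p).val = k.toNat :=
        ZMod.val_cast_of_lt (by omega)
      rw [hv, ← h1, h2]
    rw [hdw, div_eq_iff hp0]
    have hvq : (v : ℚ) = (k : ℚ) := by
      rw [hvk]; exact_mod_cast congrArg (Int.cast : ℤ → ℚ) (Int.toNat_of_nonneg hk0)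
    rw [hvq]; linarith [hk]

lemma exists_int_eq' (A d : ℤ) (hd : d ≠ 0) :
    (∃ k : ℤ, ((A : ℚ) / (d : ℚ)) = (k : ℚ)) ↔ d ∣ A := by
  have hdq : (d : ℚ) ≠ 0 := by exact_mod_cast hd
  constructor
  · rintro ⟨k, hk⟩
    rw [div_eq_iff hdq] at hk
    rw [mul_comm] at hk; exact ⟨k, by exact_mod_cast hk⟩
  · rintro ⟨c, rfl⟩
    exact ⟨c, by push_cast; field_simp⟩

lemma dwork_iff_dvd {p : ℕ} (hp : p.Prime) {x y : ℚ} {C T : ℤ}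
    (hT0 : T ≠ 0)
    (hdx : ¬ p ∣ x.den) (hdy : ¬ p ∣ y.den)
    (h0x : 0 < x) (h1x : x < 1) (h0y : 0 < y) (h1y : y < 1)
    (hexp : (p : ℚ) * y - x = (C : ℚ) / (T : ℚ)) :
    dwork p x = y ↔ T ∣ C := by
  rw [dwork_eq_iff' hp hdx hdy, ← exists_int_eq' C T hT0]
  have hpq : (0:ℚ) < p := by exact_mod_cast hp.pos
  constructor
  · rintro ⟨k, _, _, hk⟩; exact ⟨k, by rw [← hexp, hk]⟩
  · rintro ⟨k, hk⟩
    refine ⟨k, ?_, ?_, by rw [hexp, hk]⟩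
    · have h1 : (-1:ℚ) < k := by
        rw [← hk, ← hexp]; nlinarith [mul_pos hpq h0y]
      have h2 : (-1:ℤ) < k := by exact_mod_cast h1
      omega
    · have h1 : (k:ℚ) < p := by
        rw [← hk, ← hexp]; nlinarith [(mul_lt_mul_of_pos_left h1y hpq)]
      exact_mod_cast h1

lemma den_not_dvd' {p : ℕ} {x : ℚ} {A T : ℤ}
    (hx : x = (A : ℚ) / (T : ℚ)) (hT : ¬ (p : ℤ) ∣ T) : ¬ p ∣ x.den := by
  intro h
  refine hT (dvd_trans (Int.natCast_dvd_natCast.mpr h) ?_)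
  rw [hx, ← Rat.divInt_eq_div]
  exact Rat.den_dvd A T

lemma core1 (M N P s : ℤ) (hM : M ≠ 0) (hN : N ≠ 0) (hP2 : 2 ∣ P - s) :
    (2*(M*N) ∣ (P - s)*(M*N - M + N) ∧ 2*(M*N) ∣ (P - s)*(M*N - M - N)) ↔
    (∃ x y : ℤ, P - s = M*x ∧ P - s = N*y ∧ 2 ∣ x + y) := by
  have hMN : M*N ≠ 0 := mul_ne_zero hM hN
  constructor
  · rintro ⟨⟨c, hc⟩, ⟨d, hd⟩⟩
    have hx : P - s = M*(c - d) := by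
      have h : (2*N)*(P - s) = (2*N)*(M*(c - d)) := by linear_combination hc - hd
      exact mul_left_cancel₀ (by simp [hN]) h
    have hNd : N ∣ (P - s)*(N - 1) := by
      refine ⟨c + d, ?_⟩
      have h : (2*M)*((P - s)*(N - 1)) = (2*M)*(N*(c + d)) := by linear_combination hc + hd
      exact mul_left_cancel₀ (by simp [hM]) h
    obtain ⟨y, hy⟩ := (IsCoprime.dvd_of_dvd_mul_right ⟨1, -1, by ring⟩ hNd : N ∣ P - s)
    have hpar : (P - s) - y + (c - d) = 2*c := by
      have h : (M*N)*((P - s) - y + (c - d)) = (M*N)*(2*c) := by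
        linear_combination hc + M*hy - N*hx
      exact mul_left_cancel₀ hMN h
    exact ⟨c - d, y, hx, hy, by omega⟩
  · rintro ⟨x, y, hx, hy, hpar⟩
    constructor
    · obtain ⟨g, hg⟩ : 2 ∣ (P - s) - y + x := by omega
      exact ⟨g, by linear_combination (M*N)*hg - M*hy + N*hx⟩
    · obtain ⟨g, hg⟩ : 2 ∣ (P - s) - y - x := by omega
      exact ⟨g, by linear_combination (M*N)*hg - M*hy - N*hx⟩

lemma core2 (M N P s : ℤ) (hM : M ≠ 0) (hN : N ≠ 0) (hP2 : 2 ∣ P - s) :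
    (2*(M*N) ∣ P*(M*N - M - N) - s*(M*N - M + N) ∧
     2*(M*N) ∣ P*(M*N - M + N) - s*(M*N - M - N)) ↔
    (∃ x y : ℤ, P + s = M*x ∧ P - s = N*y ∧ 2 ∣ x + y) := by
  have hMN : M*N ≠ 0 := mul_ne_zero hM hN
  constructor
  · rintro ⟨⟨c, hc⟩, ⟨d, hd⟩⟩
    have hx : P + s = M*(d - c) := by
      have h : (2*N)*(P + s) = (2*N)*(M*(d - c)) := by linear_combination hd - hc
      exact mul_left_cancel₀ (by simp [hN]) h
    have hNd : N ∣ (P - s)*(N - 1) := by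
      refine ⟨c + d, ?_⟩
      have h : (2*M)*((P - s)*(N - 1)) = (2*M)*(N*(c + d)) := by linear_combination hc + hd
      exact mul_left_cancel₀ (by simp [hM]) h
    obtain ⟨y, hy⟩ := (IsCoprime.dvd_of_dvd_mul_right ⟨1, -1, by ring⟩ hNd : N ∣ P - s)
    have hpar : (P - s) - y + (d - c) = 2*d := by
      have h : (M*N)*((P - s) - y + (d - c)) = (M*N)*(2*d) := by
        linear_combination hd + M*hy - N*hx
      exact mul_left_cancel₀ hMN h
    exact ⟨d - c, y, hx, hy, by omega⟩
  · rintro ⟨x, y, hx, hy, hpar⟩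
    constructor
    · obtain ⟨g, hg⟩ : 2 ∣ (P - s) - y - x := by omega
      exact ⟨g, by linear_combination (M*N)*hg - M*hy - N*hx⟩
    · obtain ⟨g, hg⟩ : 2 ∣ (P - s) - y + x := by omega
      exact ⟨g, by linear_combination (M*N)*hg - M*hy + N*hx⟩

lemma branch' (M N P s t : ℤ) :
    ((P ≡ s [ZMOD 2*M] ∧ P ≡ t [ZMOD 2*N]) ∨
     (P ≡ M + s [ZMOD 2*M] ∧ P ≡ N + t [ZMOD 2*N])) ↔
    ∃ x y : ℤ, P - s = M*x ∧ P - t = N*y ∧ 2 ∣ x + y := by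
  simp only [Int.modEq_iff_dvd]
  constructor
  · rintro (⟨⟨c, hc⟩, ⟨d, hd⟩⟩ | ⟨⟨c, hc⟩, ⟨d, hd⟩⟩)
    · exact ⟨-2*c, -2*d, by linear_combination -hc, by linear_combination -hd, by omega⟩
    · exact ⟨1 - 2*c, 1 - 2*d, by linear_combination -hc, by linear_combination -hd, by omega⟩
  · rintro ⟨x, y, hx, hy, hpar⟩
    rcases Int.even_or_odd x with ⟨x', rfl⟩ | ⟨x', rfl⟩
    · obtain ⟨y', rfl⟩ : ∃ y', y = y' + y' := by
        rcases hpar with ⟨g, hg⟩; exact ⟨g - x', by omega⟩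
      exact Or.inl ⟨⟨-x', by linear_combination -hx⟩, ⟨-y', by linear_combination -hy⟩⟩
    · obtain ⟨y', rfl⟩ : ∃ y', y = 2*y' + 1 := by
        rcases hpar with ⟨g, hg⟩; exact ⟨g - x' - 1, by omega⟩
      exact Or.inr ⟨⟨-x', by linear_combination -hx⟩, ⟨-y', by linear_combination -hy⟩⟩

end DworkAux

/-- The Dwork map fixes `{a, b}` or sends it to `{1-a, 1-b}` iff the congruence
conditions of the main theorem hold. -/
theorem dwork_pair_iff_congruences (m₁ m₂ : ℕ) (hm₁ : 2 ≤ m₁) (hm₂ : 2 ≤ m₂)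
    (hhyp : (1 : ℚ) / m₁ + 1 / m₂ < 1) (a b : ℚ)
    (ha : a = ((m₁ : ℚ) * m₂ - m₁ + m₂) / (2 * m₁ * m₂))
    (hb : b = ((m₁ : ℚ) * m₂ - m₁ - m₂) / (2 * m₁ * m₂))
    (p : ℕ) (hp : p.Prime) (hcop : Nat.Coprime p (2 * m₁ * m₂)) :
    ((dwork p a = a ∧ dwork p b = b) ∨ (dwork p a = b ∧ dwork p b = a) ∨
      (dwork p a = 1 - a ∧ dwork p b = 1 - b) ∨ (dwork p a = 1 - b ∧ dwork p b = 1 - a)) ↔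
      ∃ ε ε' : ℤ, (ε = 1 ∨ ε = -1) ∧ (ε' = 1 ∨ ε' = -1) ∧
        (((p : ℤ) ≡ ε [ZMOD (2 * m₁ : ℤ)] ∧ (p : ℤ) ≡ ε' * ε [ZMOD (2 * m₂ : ℤ)]) ∨
          ((p : ℤ) ≡ (m₁ : ℤ) + ε [ZMOD (2 * m₁ : ℤ)] ∧
            (p : ℤ) ≡ (m₂ : ℤ) + ε' * ε [ZMOD (2 * m₂ : ℤ)])) := by
  have hnd : ¬ p ∣ 2 * m₁ * m₂ := (Nat.Prime.coprime_iff_not_dvd hp).mp hcop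
  have hp2 : p ≠ 2 := by rintro rfl; exact hnd ⟨m₁ * m₂, by ring⟩
  obtain ⟨j, hj⟩ := hp.odd_of_ne_two hp2
  have hPZ : (p : ℤ) = 2 * j + 1 := by exact_mod_cast hj
  have hPm1 : (2:ℤ) ∣ (p:ℤ) - 1 := ⟨j, by omega⟩
  have hPp1 : (2:ℤ) ∣ (p:ℤ) - -1 := ⟨j + 1, by omega⟩
  have hM0 : (m₁:ℤ) ≠ 0 := by exact_mod_cast (by omega : m₁ ≠ 0)
  have hN0 : (m₂:ℤ) ≠ 0 := by exact_mod_cast (by omega : m₂ ≠ 0)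
  have hT0 : (2*((m₁:ℤ)*(m₂:ℤ))) ≠ 0 := by
    intro h; rcases mul_eq_zero.mp h with h | h
    · norm_num at h
    · exact (mul_ne_zero hM0 hN0) h
  have hndT : ¬ ((p:ℤ)) ∣ (2*((m₁:ℤ)*(m₂:ℤ))) := by
    intro h
    apply hnd
    have h2 : ((p:ℤ)) ∣ ((2*m₁*m₂ : ℕ) : ℤ) := by
      have : ((2*m₁*m₂ : ℕ) : ℤ) = 2*((m₁:ℤ)*(m₂:ℤ)) := by push_cast; ring
      rw [this]; exact h
    exact_mod_cast h2
  -- rational bounds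
  have hm1q : (2:ℚ) ≤ m₁ := by exact_mod_cast hm₁
  have hm2q : (2:ℚ) ≤ m₂ := by exact_mod_cast hm₂
  have h1 : (0:ℚ) < m₁ := by linarith
  have h2 : (0:ℚ) < m₂ := by linarith
  have hkey : (m₁:ℚ) + m₂ < m₁ * m₂ := by
    rw [div_add_div _ _ (ne_of_gt h1) (ne_of_gt h2), div_lt_one (by positivity)] at hhyp
    linarith [hhyp]
  have hb0 : 0 < b := by
    rw [hb]; exact div_pos (by linarith) (by positivity)
  have ha1 : a < 1 := by
    rw [ha, div_lt_one (by positivity)]; nlinarith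
  have hba : b < a := by
    have hD : (0:ℚ) < 2 * ↑m₁ * ↑m₂ := by positivity
    rw [ha, hb, div_lt_div_iff₀ hD hD]
    nlinarith [mul_pos h2 hD]
  have ha0 : 0 < a := lt_trans hb0 hba
  have hb1 : b < 1 := lt_trans hba ha1
  have h1a0 : 0 < 1 - a := by linarith
  have h1a1 : 1 - a < 1 := by linarith
  have h1b0 : 0 < 1 - b := by linarith
  have h1b1 : 1 - b < 1 := by linarith
  -- integer representations
  have haA : a = ((((m₁:ℤ)*m₂ - m₁ + m₂) : ℤ) : ℚ) / (((2*((m₁:ℤ)*(m₂:ℤ))) : ℤ) : ℚ) := by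
    rw [ha]; push_cast; ring
  have hbB : b = ((((m₁:ℤ)*m₂ - m₁ - m₂) : ℤ) : ℚ) / (((2*((m₁:ℤ)*(m₂:ℤ))) : ℤ) : ℚ) := by
    rw [hb]; push_cast; ring
  have h1aA : 1 - a = ((((m₁:ℤ)*m₂ + m₁ - m₂) : ℤ) : ℚ) / (((2*((m₁:ℤ)*(m₂:ℤ))) : ℤ) : ℚ) := by
    rw [ha]; push_cast; field_simp; ring
  have h1bB : 1 - b = ((((m₁:ℤ)*m₂ + m₁ + m₂) : ℤ) : ℚ) / (((2*((m₁:ℤ)*(m₂:ℤ))) : ℤ) : ℚ) := by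
    rw [hb]; push_cast; field_simp; ring
  have hda : ¬ p ∣ a.den := den_not_dvd' haA hndT
  have hdb : ¬ p ∣ b.den := den_not_dvd' hbB hndT
  have hd1a : ¬ p ∣ (1 - a).den := den_not_dvd' h1aA hndT
  have hd1b : ¬ p ∣ (1 - b).den := den_not_dvd' h1bB hndT
  have hm1ne : (m₁:ℚ) ≠ 0 := ne_of_gt h1
  have hm2ne : (m₂:ℚ) ≠ 0 := ne_of_gt h2
  have hTq' : (((2*((m₁:ℤ)*(m₂:ℤ))) : ℤ) : ℚ) ≠ 0 := by exact_mod_cast hT0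
  have e1 : dwork p a = a ↔
      2*((m₁:ℤ)*(m₂:ℤ)) ∣ ((p:ℤ) - 1)*((m₁:ℤ)*(m₂:ℤ) - (m₁:ℤ) + (m₂:ℤ)) := by
    refine dwork_iff_dvd hp hT0 hda hda ha0 ha1 ha0 ha1 ?_
    rw [ha, eq_div_iff hTq']; push_cast; field_simp
  have e2 : dwork p b = b ↔
      2*((m₁:ℤ)*(m₂:ℤ)) ∣ ((p:ℤ) - 1)*((m₁:ℤ)*(m₂:ℤ) - (m₁:ℤ) - (m₂:ℤ)) := by
    refine dwork_iff_dvd hp hT0 hdb hdb hb0 hb1 hb0 hb1 ?_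
    rw [hb, eq_div_iff hTq']; push_cast; field_simp
  have e3 : dwork p a = b ↔
      2*((m₁:ℤ)*(m₂:ℤ)) ∣ (p:ℤ)*((m₁:ℤ)*(m₂:ℤ) - (m₁:ℤ) - (m₂:ℤ))
        - 1*((m₁:ℤ)*(m₂:ℤ) - (m₁:ℤ) + (m₂:ℤ)) := by
    refine dwork_iff_dvd hp hT0 hda hdb ha0 ha1 hb0 hb1 ?_
    rw [ha, hb, eq_div_iff hTq']; push_cast; field_simp
  have e4 : dwork p b = a ↔
      2*((m₁:ℤ)*(m₂:ℤ)) ∣ (p:ℤ)*((m₁:ℤ)*(m₂:ℤ) - (m₁:ℤ) + (m₂:ℤ))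
        - 1*((m₁:ℤ)*(m₂:ℤ) - (m₁:ℤ) - (m₂:ℤ)) := by
    refine dwork_iff_dvd hp hT0 hdb hda hb0 hb1 ha0 ha1 ?_
    rw [ha, hb, eq_div_iff hTq']; push_cast; field_simp
  have e5 : dwork p a = 1 - a ↔
      2*((m₁:ℤ)*(m₂:ℤ)) ∣ 2*((m₁:ℤ)*(m₂:ℤ))*(p:ℤ)
        - ((p:ℤ) - -1)*((m₁:ℤ)*(m₂:ℤ) - (m₁:ℤ) + (m₂:ℤ)) := by
    refine dwork_iff_dvd hp hT0 hda hd1a ha0 ha1 h1a0 h1a1 ?_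
    rw [ha, eq_div_iff hTq']; push_cast; field_simp; ring
  have e5' : dwork p a = 1 - a ↔
      2*((m₁:ℤ)*(m₂:ℤ)) ∣ ((p:ℤ) - -1)*((m₁:ℤ)*(m₂:ℤ) - (m₁:ℤ) + (m₂:ℤ)) := by
    rw [e5]
    constructor
    · rintro ⟨c, hc⟩; exact ⟨(p:ℤ) - c, by linear_combination -hc⟩
    · rintro ⟨c, hc⟩; exact ⟨(p:ℤ) - c, by linear_combination -hc⟩
  have e6 : dwork p b = 1 - b ↔
      2*((m₁:ℤ)*(m₂:ℤ)) ∣ 2*((m₁:ℤ)*(m₂:ℤ))*(p:ℤ)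
        - ((p:ℤ) - -1)*((m₁:ℤ)*(m₂:ℤ) - (m₁:ℤ) - (m₂:ℤ)) := by
    refine dwork_iff_dvd hp hT0 hdb hd1b hb0 hb1 h1b0 h1b1 ?_
    rw [hb, eq_div_iff hTq']; push_cast; field_simp; ring
  have e6' : dwork p b = 1 - b ↔
      2*((m₁:ℤ)*(m₂:ℤ)) ∣ ((p:ℤ) - -1)*((m₁:ℤ)*(m₂:ℤ) - (m₁:ℤ) - (m₂:ℤ)) := by
    rw [e6]
    constructor
    · rintro ⟨c, hc⟩; exact ⟨(p:ℤ) - c, by linear_combination -hc⟩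
    · rintro ⟨c, hc⟩; exact ⟨(p:ℤ) - c, by linear_combination -hc⟩
  have e7 : dwork p a = 1 - b ↔
      2*((m₁:ℤ)*(m₂:ℤ)) ∣ 2*((m₁:ℤ)*(m₂:ℤ))*(p:ℤ)
        - ((p:ℤ)*((m₁:ℤ)*(m₂:ℤ) - (m₁:ℤ) - (m₂:ℤ))
          - -1*((m₁:ℤ)*(m₂:ℤ) - (m₁:ℤ) + (m₂:ℤ))) := by
    refine dwork_iff_dvd hp hT0 hda hd1b ha0 ha1 h1b0 h1b1 ?_
    rw [ha, hb, eq_div_iff hTq']; push_cast; field_simp; first | ring1 | exact Or.inl (by ring1)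
  have e7' : dwork p a = 1 - b ↔
      2*((m₁:ℤ)*(m₂:ℤ)) ∣ (p:ℤ)*((m₁:ℤ)*(m₂:ℤ) - (m₁:ℤ) - (m₂:ℤ))
        - -1*((m₁:ℤ)*(m₂:ℤ) - (m₁:ℤ) + (m₂:ℤ)) := by
    rw [e7]
    constructor
    · rintro ⟨c, hc⟩; exact ⟨(p:ℤ) - c, by linear_combination -hc⟩
    · rintro ⟨c, hc⟩; exact ⟨(p:ℤ) - c, by linear_combination -hc⟩
  have e8 : dwork p b = 1 - a ↔
      2*((m₁:ℤ)*(m₂:ℤ)) ∣ 2*((m₁:ℤ)*(m₂:ℤ))*(p:ℤ)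
        - ((p:ℤ)*((m₁:ℤ)*(m₂:ℤ) - (m₁:ℤ) + (m₂:ℤ))
          - -1*((m₁:ℤ)*(m₂:ℤ) - (m₁:ℤ) - (m₂:ℤ))) := by
    refine dwork_iff_dvd hp hT0 hdb hd1a hb0 hb1 h1a0 h1a1 ?_
    rw [ha, hb, eq_div_iff hTq']; push_cast; field_simp; first | ring1 | exact Or.inl (by ring1)
  have e8' : dwork p b = 1 - a ↔
      2*((m₁:ℤ)*(m₂:ℤ)) ∣ (p:ℤ)*((m₁:ℤ)*(m₂:ℤ) - (m₁:ℤ) + (m₂:ℤ))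
        - -1*((m₁:ℤ)*(m₂:ℤ) - (m₁:ℤ) - (m₂:ℤ)) := by
    rw [e8]
    constructor
    · rintro ⟨c, hc⟩; exact ⟨(p:ℤ) - c, by linear_combination -hc⟩
    · rintro ⟨c, hc⟩; exact ⟨(p:ℤ) - c, by linear_combination -hc⟩
  have c1 : (dwork p a = a ∧ dwork p b = b) ↔
      (∃ x y : ℤ, (p:ℤ) - 1 = (m₁:ℤ)*x ∧ (p:ℤ) - 1 = (m₂:ℤ)*y ∧ 2 ∣ x + y) := by
    rw [e1, e2]; exact core1 _ _ _ 1 hM0 hN0 hPm1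
  have c2 : (dwork p a = b ∧ dwork p b = a) ↔
      (∃ x y : ℤ, (p:ℤ) + 1 = (m₁:ℤ)*x ∧ (p:ℤ) - 1 = (m₂:ℤ)*y ∧ 2 ∣ x + y) := by
    rw [e3, e4]; exact core2 _ _ _ 1 hM0 hN0 hPm1
  have c3 : (dwork p a = 1 - a ∧ dwork p b = 1 - b) ↔
      (∃ x y : ℤ, (p:ℤ) - -1 = (m₁:ℤ)*x ∧ (p:ℤ) - -1 = (m₂:ℤ)*y ∧ 2 ∣ x + y) := by
    rw [e5', e6']; exact core1 _ _ _ (-1) hM0 hN0 hPp1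
  have c4 : (dwork p a = 1 - b ∧ dwork p b = 1 - a) ↔
      (∃ x y : ℤ, (p:ℤ) + -1 = (m₁:ℤ)*x ∧ (p:ℤ) - -1 = (m₂:ℤ)*y ∧ 2 ∣ x + y) := by
    rw [e7', e8']; exact core2 _ _ _ (-1) hM0 hN0 hPp1
  rw [c1, c2, c3, c4]
  constructor
  · rintro (⟨x,y,hx,hy,hxy⟩ | ⟨x,y,hx,hy,hxy⟩ | ⟨x,y,hx,hy,hxy⟩ | ⟨x,y,hx,hy,hxy⟩)
    · exact ⟨1, 1, Or.inl rfl, Or.inl rfl,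
        (branch' _ _ _ 1 (1*1)).mpr
          ⟨x, y, by linear_combination hx, by linear_combination hy, hxy⟩⟩
    · exact ⟨-1, -1, Or.inr rfl, Or.inr rfl,
        (branch' _ _ _ (-1) ((-1)*(-1))).mpr
          ⟨x, y, by linear_combination hx, by linear_combination hy, hxy⟩⟩
    · exact ⟨-1, 1, Or.inr rfl, Or.inl rfl,
        (branch' _ _ _ (-1) (1*(-1))).mpr
          ⟨x, y, by linear_combination hx, by linear_combination hy, hxy⟩⟩
    · exact ⟨1, -1, Or.inl rfl, Or.inr rfl,
        (branch' _ _ _ 1 ((-1)*1)).mpr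
          ⟨x, y, by linear_combination hx, by linear_combination hy, hxy⟩⟩
  · rintro ⟨ε, ε', (rfl|rfl), (rfl|rfl), hcong⟩
    · obtain ⟨x,y,hx,hy,hxy⟩ := (branch' _ _ _ 1 (1*1)).mp hcong
      exact Or.inl ⟨x, y, by linear_combination hx, by linear_combination hy, hxy⟩
    · obtain ⟨x,y,hx,hy,hxy⟩ := (branch' _ _ _ 1 ((-1)*1)).mp hcong
      exact Or.inr (Or.inr (Or.inr
        ⟨x, y, by linear_combination hx, by linear_combination hy, hxy⟩))
    · obtain ⟨x,y,hx,hy,hxy⟩ := (branch' _ _ _ (-1) (1*(-1))).mp hcong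
      exact Or.inr (Or.inr (Or.inl
        ⟨x, y, by linear_combination hx, by linear_combination hy, hxy⟩))
    · obtain ⟨x,y,hx,hy,hxy⟩ := (branch' _ _ _ (-1) ((-1)*(-1))).mp hcong
      exact Or.inr (Or.inl
        ⟨x, y, by linear_combination hx, by linear_combination hy, hxy⟩)
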